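/- Let n be a positive integer. The ℂ-algebra homomorphism from the polynomial ring ℂ[y₁,…,yₙ] to the polynomial ring ℂ[z₁,…,zₙ,w₁,…,wₙ] sending y_i to z_i w_i for each i is a flat ring homomorphism. -/

import Mathlib

open MvPolynomial Finsupp

noncomputable section AuxFlat

variable (n : ℕ)

/-- Pointwise min of the two halves of an exponent vector. -/
def dmin (f : Fin n ⊕ Fin n →₀ ℕ) : Fin n →₀ ℕ :=
  Finsupp.equivFunOnFinite.symm fun i => min (f (Sum.inl i)) (f (Sum.inr i))

@[simp] lemma dmin_apply (f : Fin n ⊕ Fin n →₀ ℕ) (i : Fin n) :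
    dmin n f i = min (f (Sum.inl i)) (f (Sum.inr i)) := rfl

/-- Doubling: `g ↦ (g, g)`. -/
def dbl (g : Fin n →₀ ℕ) : Fin n ⊕ Fin n →₀ ℕ := g.sumElim g

@[simp] lemma dbl_apply (g : Fin n →₀ ℕ) (a : Fin n ⊕ Fin n) :
    dbl n g a = Sum.elim g g a := rfl

/-- Index set of the monomial basis of `ℂ[z,w]` over `ℂ[zw]`. -/
def Bset : Type := {e : Fin n ⊕ Fin n →₀ ℕ // dmin n e = 0}

lemma dmin_sub_dbl (f : Fin n ⊕ Fin n →₀ ℕ) :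
    dmin n (f - dbl n (dmin n f)) = 0 := by
  ext i
  simp only [dmin_apply, Finsupp.tsub_apply, dbl_apply, Sum.elim_inl, Sum.elim_inr,
    Finsupp.coe_zero, Pi.zero_apply]
  omega

/-- The exponent bijection: `f ↦ (f - dbl (dmin f), dmin f)`. -/
def expEquiv : (Fin n ⊕ Fin n →₀ ℕ) ≃ Σ _ : Bset n, (Fin n →₀ ℕ) where
  toFun f := ⟨⟨f - dbl n (dmin n f), dmin_sub_dbl n f⟩, dmin n f⟩
  invFun x := x.1.1 + dbl n x.2
  left_inv f := by
    ext a
    rcases a with i | i <;>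
      simp only [Finsupp.add_apply, Finsupp.tsub_apply, dbl_apply, Sum.elim_inl, Sum.elim_inr,
        dmin_apply] <;> omega
  right_inv := by
    rintro ⟨⟨e, he⟩, g⟩
    have he' : ∀ i, min (e (Sum.inl i)) (e (Sum.inr i)) = 0 := fun i => by
      have := congrArg (fun v => v i) he; simpa using this
    have hmin : dmin n (e + dbl n g) = g := by
      ext i
      have := he' i
      simp only [dmin_apply, Finsupp.add_apply, dbl_apply, Sum.elim_inl, Sum.elim_inr]
      omega
    refine Sigma.ext ?_ (by show HEq (dmin n (e + dbl n g)) _; rw [hmin])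
    apply Subtype.ext
    show (e + dbl n g) - dbl n (dmin n (e + dbl n g)) = e
    rw [hmin]
    ext a
    rcases a with i | i <;>
      simp only [Finsupp.tsub_apply, Finsupp.add_apply, dbl_apply, Sum.elim_inl, Sum.elim_inr] <;>
      omega

lemma expEquiv_shift (f : Fin n ⊕ Fin n →₀ ℕ) (g : Fin n →₀ ℕ) :
    expEquiv n (dbl n g + f)
      = ⟨(expEquiv n f).1, (expEquiv n f).2 + g⟩ := by
  have hmin : dmin n (dbl n g + f) = dmin n f + g := by
    ext i
    simp only [dmin_apply, Finsupp.add_apply, dbl_apply, Sum.elim_inl, Sum.elim_inr,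
      Finsupp.coe_add, Pi.add_apply]
    omega
  refine Sigma.ext ?_ ?_
  · apply Subtype.ext
    show (dbl n g + f) - dbl n (dmin n (dbl n g + f)) = f - dbl n (dmin n f)
    rw [hmin]
    ext a
    rcases a with i | i <;>
      simp only [Finsupp.tsub_apply, Finsupp.add_apply, dbl_apply, Sum.elim_inl, Sum.elim_inr,
        dmin_apply, Finsupp.coe_add, Pi.add_apply] <;> omega
  · show HEq (dmin n (dbl n g + f)) ((expEquiv n f).2 + g)
    rw [hmin]
    show HEq (dmin n f + g) (dmin n f + g)
    rfl

local notation "φ" => (aeval fun i : Fin n =>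
      (X (Sum.inl i) * X (Sum.inr i) : MvPolynomial (Fin n ⊕ Fin n) ℂ) :
        MvPolynomial (Fin n) ℂ →ₐ[ℂ] MvPolynomial (Fin n ⊕ Fin n) ℂ)

lemma phi_monomial (g : Fin n →₀ ℕ) :
    φ (monomial g 1) = monomial (dbl n g) 1 := by
  induction g using Finsupp.induction with
  | zero =>
    have : dbl n 0 = 0 := by ext a; rcases a with i | i <;> simp [dbl]
    simp [this]
  | single_add a b f ha hb ih =>
    have h1 : (monomial (single a b + f) (1 : ℂ)) = monomial (single a b) 1 * monomial f 1 := by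
      rw [monomial_mul, one_mul]
    have h2 : dbl n (single a b + f)
        = (single (Sum.inl a) b + single (Sum.inr a) b) + dbl n f := by
      ext x
      rcases x with i | i <;>
        simp [dbl, Finsupp.single_apply, Finsupp.add_apply]
    have h3 : φ (monomial (single a b) (1 : ℂ))
        = monomial (single (Sum.inl a) b + single (Sum.inr a) b) 1 := by
      rw [← X_pow_eq_monomial, map_pow, aeval_X, mul_pow, X_pow_eq_monomial,
        X_pow_eq_monomial, monomial_mul, one_mul]
    rw [h1, map_mul, ih, h3, h2, monomial_mul, one_mul]

/-- The `ℂ`-linear equivalence regrouping monomials. -/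
def Fequiv : MvPolynomial (Fin n ⊕ Fin n) ℂ
    ≃ₗ[ℂ] (Bset n →₀ MvPolynomial (Fin n) ℂ) :=
  (basisMonomials (Fin n ⊕ Fin n) ℂ).equiv
    (Finsupp.basis fun _ : Bset n => basisMonomials (Fin n) ℂ) (expEquiv n)

lemma Fequiv_monomial (f : Fin n ⊕ Fin n →₀ ℕ) :
    Fequiv n (monomial f 1)
      = single (expEquiv n f).1 (monomial (expEquiv n f).2 1) := by
  have h : (monomial f (1 : ℂ)) = basisMonomials (Fin n ⊕ Fin n) ℂ f := by
    rw [coe_basisMonomials]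
  rw [h, Fequiv, Module.Basis.equiv_apply, Finsupp.coe_basis]
  simp [coe_basisMonomials]

lemma Fequiv_key (g : Fin n →₀ ℕ) (s : MvPolynomial (Fin n ⊕ Fin n) ℂ) :
    Fequiv n (monomial (dbl n g) 1 * s) = monomial g (1 : ℂ) • Fequiv n s := by
  let L1 : MvPolynomial (Fin n ⊕ Fin n) ℂ →ₗ[ℂ] (Bset n →₀ MvPolynomial (Fin n) ℂ) :=
    (Fequiv n).toLinearMap ∘ₗ LinearMap.mulLeft ℂ (monomial (dbl n g) 1)
  let L2 : MvPolynomial (Fin n ⊕ Fin n) ℂ →ₗ[ℂ] (Bset n →₀ MvPolynomial (Fin n) ℂ) :=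
    (LinearMap.lsmul (MvPolynomial (Fin n) ℂ) (Bset n →₀ MvPolynomial (Fin n) ℂ)
      (monomial g 1)).restrictScalars ℂ ∘ₗ (Fequiv n).toLinearMap
  have hL : L1 = L2 := by
    refine (basisMonomials (Fin n ⊕ Fin n) ℂ).ext (fun f => ?_)
    have hb : basisMonomials (Fin n ⊕ Fin n) ℂ f = monomial f 1 := by
      rw [coe_basisMonomials]
    simp only [L1, L2, hb, LinearMap.comp_apply, LinearMap.mulLeft_apply,
      LinearMap.restrictScalars_apply, LinearMap.lsmul_apply, LinearEquiv.coe_coe]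
    rw [monomial_mul, one_mul, Fequiv_monomial, Fequiv_monomial, expEquiv_shift,
      Finsupp.smul_single, smul_eq_mul, monomial_mul, one_mul, add_comm g]
  exact LinearMap.congr_fun hL s

end AuxFlat

/-- The `ℂ`-algebra homomorphism `ℂ[y₁,…,yₙ] → ℂ[z₁,…,zₙ,w₁,…,wₙ]`, `yᵢ ↦ zᵢwᵢ`,
is a flat ring homomorphism. -/
theorem stmt_1 (n : ℕ) (hn : 0 < n) :
    RingHom.Flat ((aeval fun i : Fin n =>
      (X (Sum.inl i) * X (Sum.inr i) : MvPolynomial (Fin n ⊕ Fin n) ℂ) :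
        MvPolynomial (Fin n) ℂ →ₐ[ℂ] MvPolynomial (Fin n ⊕ Fin n) ℂ) :
      MvPolynomial (Fin n) ℂ →+* MvPolynomial (Fin n ⊕ Fin n) ℂ) := by
  set R := MvPolynomial (Fin n) ℂ with hR
  set S := MvPolynomial (Fin n ⊕ Fin n) ℂ with hS
  set f : R →+* S := ((aeval fun i : Fin n =>
      (X (Sum.inl i) * X (Sum.inr i) : S) : R →ₐ[ℂ] S) :
      R →+* S) with hf
  letI : Algebra R S := f.toAlgebra
  have hsmul : ∀ (p : R) (s : S), p • s = f p * s := fun p s => by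
    rw [Algebra.smul_def, RingHom.algebraMap_toAlgebra]
  have key : ∀ (p : R) (s : S), Fequiv n (f p * s) = p • Fequiv n s := by
    intro p
    induction p using MvPolynomial.induction_on with
    | C a =>
      intro s
      have h1 : f (C a) = C a := by
        show (aeval fun i : Fin n =>
          (X (Sum.inl i) * X (Sum.inr i) : S)) (C a) = C a
        rw [aeval_C, algebraMap_eq]
      rw [h1, ← smul_eq_C_mul, map_smul, ← algebraMap_smul R a (Fequiv n s), algebraMap_eq]
    | add p q hp hq =>
      intro s
      rw [map_add, add_mul, map_add, hp, hq, add_smul]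
    | mul_X p i hp =>
      intro s
      have hXi : f (X i) = monomial (dbl n (single i 1)) 1 := by
        have := phi_monomial n (single i 1)
        rwa [← X_pow_eq_monomial, pow_one] at this
      rw [map_mul f, mul_assoc, hp, hXi, Fequiv_key, smul_smul, ← pow_one (X i : R),
        X_pow_eq_monomial]
  show Module.Flat R S
  refine Module.Flat.of_linearEquiv (M := Bset n →₀ R) ?_
  exact
    { toFun := ⇑(Fequiv n)
      invFun := ⇑(Fequiv n).symm
      left_inv := (Fequiv n).left_inv
      right_inv := (Fequiv n).right_inv
      map_add' := fun a b => map_add _ a b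
      map_smul' := fun p s => by rw [hsmul]; exact key p s }
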